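/- Let G be a non-abelian group of order pq, where p and q are primes with p > q. Then G has exactly one proper non-trivial normal subgroup H, H is (1 + (p-1)/q)-decomposable, and G is {1, 1 + (p-1)/q}-decomposable. -/

import Mathlib

open Pointwise


/-- `ncc A` is the number of conjugacy classes of `G` contained in the subgroup `A`. -/
noncomputable def ncc {G : Type*} [Group G] (A : Subgroup G) : ℕ :=
  Nat.card {c : ConjClasses G // c.carrier ⊆ (A : Set G)}

/-- `KG G` is the set of values `ncc A` for `A` a proper normal subgroup of `G`. -/
def KG (G : Type*) [Group G] : Set ℕ :=
  {n | ∃ A : Subgroup G, A.Normal ∧ A ≠ ⊤ ∧ ncc A = n}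

/-- `G` is `X`-decomposable if `KG G = X`. -/
def XDecomposable (G : Type*) [Group G] (X : Set ℕ) : Prop := KG G = X

section aux
private lemma dvd_pq_cases {p q d : ℕ} (hp : p.Prime) (hq : q.Prime) (hd : d ∣ p * q) :
    d = 1 ∨ d = p ∨ d = q ∨ d = p * q := by
  by_cases hpd : p ∣ d
  · obtain ⟨e, rfl⟩ := hpd
    have he : e ∣ q := (mul_dvd_mul_iff_left hp.pos.ne').mp hd
    rcases hq.eq_one_or_self_of_dvd e he with h | h
    · right; left; simp [h]
    · right; right; right; rw [h]
  · have hco : d.Coprime p := (hp.coprime_iff_not_dvd.mpr hpd).symm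
    have : d ∣ q := hco.dvd_of_dvd_mul_left hd
    rcases hq.eq_one_or_self_of_dvd d this with h | h
    · exact Or.inl h
    · exact Or.inr (Or.inr (Or.inl h))

private lemma mul_comm_of_cyclic {G : Type*} [Group G] {H : Subgroup G} (hH : IsCyclic H)
    {x y : G} (hx : x ∈ H) (hy : y ∈ H) : x * y = y * x := by
  obtain ⟨z, hz⟩ := hH.exists_generator
  obtain ⟨m, hm⟩ := hz ⟨x, hx⟩
  obtain ⟨n, hn⟩ := hz ⟨y, hy⟩
  have hx' : x = (z : G) ^ m := by
    have := congrArg (Subtype.val) hm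
    simpa using this.symm
  have hy' : y = (z : G) ^ n := by
    have := congrArg (Subtype.val) hn
    simpa using this.symm
  rw [hx', hy']
  exact ((Commute.refl (z : G)).zpow_zpow m n).eq

private lemma carrier_mk_one {G : Type*} [Group G] :
    (ConjClasses.mk (1 : G)).carrier = {1} := by
  ext x
  simp [ConjClasses.mem_carrier_iff_mk_eq, ConjClasses.mk_eq_mk_iff_isConj, isConj_one_left]

private lemma ncc_eq_aux {G : Type*} [Group G] [Finite G] {A : Subgroup G} (hA : A.Normal) {q : ℕ}
    (hclass : ∀ g : G, g ∈ A → g ≠ 1 → Nat.card (ConjClasses.mk g).carrier = q) :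
    Nat.card A = 1 + (ncc A - 1) * q ∧ 1 ≤ ncc A := by
  classical
  haveI : Fintype G := Fintype.ofFinite G
  have hsub : ∀ x : A, (ConjClasses.mk (x : G)).carrier ⊆ (A : Set G) := by
    intro x y hy
    rw [ConjClasses.mem_carrier_iff_mk_eq, ConjClasses.mk_eq_mk_iff_isConj] at hy
    obtain ⟨c, hc⟩ := isConj_iff.mp hy.symm
    exact hc ▸ hA.conj_mem _ x.2 c
  let T := {c : ConjClasses G // c.carrier ⊆ (A : Set G)}
  let π : A → T := fun x => ⟨ConjClasses.mk (x : G), hsub x⟩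
  have hncc : ncc A = Nat.card T := rfl
  have hfiber : ∀ c : T, Nat.card {x : A // π x = c} = Nat.card c.1.carrier := by
    intro c
    apply Nat.card_congr
    refine ⟨fun x => ⟨(x.1 : G), ?_⟩, fun g => ⟨⟨(g : G), c.2 g.2⟩, ?_⟩, ?_, ?_⟩
    · rw [ConjClasses.mem_carrier_iff_mk_eq]
      exact congrArg Subtype.val x.2
    · exact Subtype.ext (ConjClasses.mem_carrier_iff_mk_eq.mp g.2)
    · intro x; apply Subtype.ext; apply Subtype.ext; rfl
    · intro g; apply Subtype.ext; rfl
  have hcardA : Nat.card A = ∑ c : T, Nat.card {x : A // π x = c} := by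
    rw [← Nat.card_congr (Equiv.sigmaFiberEquiv π), Nat.card_eq_fintype_card,
      Fintype.card_sigma]
    simp [Nat.card_eq_fintype_card]
  let c₀ : T := ⟨ConjClasses.mk 1, by rw [carrier_mk_one]; simpa using A.one_mem⟩
  have hc₀card : Nat.card (c₀.1.carrier) = 1 := by
    show Nat.card ((ConjClasses.mk (1:G)).carrier) = 1
    rw [carrier_mk_one]
    simp
  have hrest : ∀ c : T, c ≠ c₀ → Nat.card c.1.carrier = q := by
    intro c hc
    obtain ⟨g, hg⟩ := ConjClasses.exists_rep c.1
    have hgA : g ∈ A := c.2 (by rw [ConjClasses.mem_carrier_iff_mk_eq]; exact hg)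
    have hg1 : g ≠ 1 := by
      rintro rfl
      exact hc (Subtype.ext hg.symm)
    rw [← hg]
    exact hclass g hgA hg1
  have hsum : ∑ c : T, Nat.card c.1.carrier = 1 + (Nat.card T - 1) * q := by
    rw [← Finset.add_sum_erase Finset.univ _ (Finset.mem_univ c₀), hc₀card]
    congr 1
    rw [Finset.sum_congr rfl (fun c hcmem => hrest c (Finset.ne_of_mem_erase hcmem)),
      Finset.sum_const, Finset.card_erase_of_mem (Finset.mem_univ c₀), Finset.card_univ,
      smul_eq_mul, Nat.card_eq_fintype_card]
  have hpos : 1 ≤ ncc A := by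
    rw [hncc]
    haveI : Nonempty T := ⟨c₀⟩
    exact Nat.one_le_iff_ne_zero.mpr (Nat.card_pos (α := T)).ne'
  refine ⟨?_, hpos⟩
  rw [hcardA, Finset.sum_congr rfl (fun c _ => hfiber c), hsum, hncc]
end aux

/-- A non-abelian group of order `p * q` (`p`, `q` primes, `p > q`) has exactly one proper
non-trivial normal subgroup `H`; this `H` is `(1 + (p-1)/q)`-decomposable, and `G` is
`{1, 1 + (p-1)/q}`-decomposable. -/
theorem pq_group_decomposable {G : Type*} [Group G] (p q : ℕ)
    (hp : p.Prime) (hq : q.Prime) (hpq : q < p)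
    (hcard : Nat.card G = p * q) (hna : ¬ ∀ a b : G, a * b = b * a) :
    (∃! H : Subgroup G, H.Normal ∧ H ≠ ⊥ ∧ H ≠ ⊤) ∧
    (∀ H : Subgroup G, H.Normal → H ≠ ⊥ → H ≠ ⊤ → ncc H = 1 + (p - 1) / q) ∧
    XDecomposable G {1, 1 + (p - 1) / q} := by
  classical
  haveI hp' : Fact p.Prime := ⟨hp⟩
  haveI hq' : Fact q.Prime := ⟨hq⟩
  have hp0 : 0 < p := hp.pos
  have hq0 : 0 < q := hq.pos
  have hpne : p ≠ q := hpq.ne'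
  have hcop : Nat.Coprime p q := (Nat.coprime_primes hp hq).mpr hpne
  have hGpos : Nat.card G ≠ 0 := by rw [hcard]; positivity
  haveI hfin : Finite G := Nat.finite_of_card_ne_zero hGpos
  obtain ⟨P⟩ : Nonempty (Sylow p G) := inferInstance
  have hPcard : Nat.card (P : Subgroup G) = p := by
    have h1 := P.card_eq_multiplicity
    rw [hcard, Nat.factorization_mul hp0.ne' hq0.ne'] at h1
    have h2 : ¬ p ∣ q := fun h => absurd (Nat.le_of_dvd hq0 h) (not_le.mpr hpq)
    rw [Finsupp.add_apply, hp.factorization, Finsupp.single_eq_same,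
      Nat.factorization_eq_zero_of_not_dvd h2] at h1
    simpa using h1
  have hPindex : (P : Subgroup G).index = q := by
    have h1 := Subgroup.card_mul_index (P : Subgroup G)
    rw [hPcard, hcard] at h1
    exact Nat.eq_of_mul_eq_mul_left hp0 h1
  have hsyl : Nat.card (Sylow p G) = 1 := by
    have hdvd : Nat.card (Sylow p G) ∣ q := hPindex ▸ Sylow.card_dvd_index P
    rcases hq.eq_one_or_self_of_dvd _ hdvd with h | h
    · exact h
    · exfalso
      have hmod := card_sylow_modEq_one p G
      rw [h] at hmod
      have h2 : p ∣ q - 1 := (Nat.modEq_iff_dvd' hq0).mp hmod.symm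
      have h3 := hq.two_le
      have h4 := Nat.le_of_dvd (by omega) h2
      omega
  have hPnormal : (P : Subgroup G).Normal := by
    rw [← Subgroup.normalizer_eq_top_iff]
    apply Subgroup.index_eq_one.mp
    exact (Sylow.card_eq_index_normalizer P).symm.trans hsyl
  have hcenter : Subgroup.center G = ⊥ := by
    have hdvd : Nat.card (Subgroup.center G) ∣ p * q :=
      hcard ▸ Subgroup.card_subgroup_dvd_card _
    have hnotop : Subgroup.center G ≠ ⊤ := by
      intro h
      exact hna fun a b => (Subgroup.mem_center_iff.mp (h ▸ Subgroup.mem_top b)) a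
    have hquot : ∀ r : ℕ, r.Prime → Nat.card (G ⧸ Subgroup.center G) = r → False := by
      intro r hr hrcard
      haveI : Fact r.Prime := ⟨hr⟩
      haveI : IsCyclic (G ⧸ Subgroup.center G) := isCyclic_of_prime_card hrcard
      exact hna (commutative_of_cyclic_center_quotient (QuotientGroup.mk' (Subgroup.center G))
        (by rw [QuotientGroup.ker_mk']))
    have htot := Subgroup.card_eq_card_quotient_mul_card_subgroup (Subgroup.center G)
    rw [hcard] at htot
    rcases dvd_pq_cases hp hq hdvd with h | h | h | h
    · exact Subgroup.card_eq_one.mp h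
    · exfalso
      apply hquot q hq
      rw [h] at htot
      exact Nat.eq_of_mul_eq_mul_right hp0 (htot.symm.trans (mul_comm p q))
    · exfalso
      apply hquot p hp
      rw [h] at htot
      exact Nat.eq_of_mul_eq_mul_right hq0 htot.symm
    · exact absurd (Subgroup.eq_top_of_card_eq _ (h.trans hcard.symm)) hnotop
  have hPcyc : IsCyclic (P : Subgroup G) := isCyclic_of_prime_card hPcard
  have hcent : ∀ g : G, g ∈ (P : Subgroup G) → g ≠ 1 →
      Subgroup.centralizer {g} = (P : Subgroup G) := by
    intro g hg hg1
    have hle : (P : Subgroup G) ≤ Subgroup.centralizer {g} := by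
      intro x hx
      rw [Subgroup.mem_centralizer_iff]
      rintro s rfl
      exact mul_comm_of_cyclic hPcyc hg hx
    have hnetop : Subgroup.centralizer {g} ≠ ⊤ := by
      intro h
      apply hg1
      rw [← Subgroup.mem_bot, ← hcenter, Subgroup.mem_center_iff]
      intro y
      have hy' : y ∈ Subgroup.centralizer {g} := by rw [h]; trivial
      exact (Subgroup.mem_centralizer_iff.mp hy' g rfl).symm
    have hdvd : Nat.card (Subgroup.centralizer {g}) ∣ p * q :=
      hcard ▸ Subgroup.card_subgroup_dvd_card _
    have hpdvd : p ∣ Nat.card (Subgroup.centralizer {g}) :=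
      hPcard ▸ Subgroup.card_dvd_of_le hle
    rcases dvd_pq_cases hp hq hdvd with h | h | h | h
    · rw [h] at hpdvd
      exact absurd (Nat.dvd_one.mp hpdvd) hp.ne_one
    · exact (Subgroup.eq_of_le_of_card_ge hle (by rw [h, hPcard])).symm
    · rw [h] at hpdvd
      exact absurd ((Nat.prime_dvd_prime_iff_eq hp hq).mp hpdvd) hpne
    · exact absurd (Subgroup.eq_top_of_card_eq _ (h.trans hcard.symm)) hnetop
  have hclassP : ∀ g : G, g ∈ (P : Subgroup G) → g ≠ 1 →
      Nat.card (ConjClasses.mk g).carrier = q := by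
    intro g hg hg1
    have hstab : Nat.card (MulAction.stabilizer (ConjAct G) g) = p := by
      have h2 : Nat.card (Subgroup.centralizer {g}) = p := by rw [hcent g hg hg1, hPcard]
      rw [Subgroup.centralizer_eq_comap_stabilizer] at h2
      rw [← h2]
      exact Nat.card_congr
        (Equiv.subtypeEquiv ConjAct.toConjAct.toEquiv (fun x => Iff.rfl)).symm
    have hConj : Nat.card (ConjAct G) = Nat.card G := Nat.card_congr ConjAct.ofConjAct.toEquiv
    have horb : Nat.card (MulAction.orbit (ConjAct G) g) *
        Nat.card (MulAction.stabilizer (ConjAct G) g) = Nat.card G := by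
      rw [← hConj, Nat.card_congr (MulAction.orbitEquivQuotientStabilizer (ConjAct G) g)]
      exact (Subgroup.card_eq_card_quotient_mul_card_subgroup _).symm
    have horb' : Nat.card (MulAction.orbit (ConjAct G) g) = q := by
      rw [hstab, hcard] at horb
      exact Nat.eq_of_mul_eq_mul_right hp0 (horb.trans (mul_comm p q))
    rw [← ConjAct.orbit_eq_carrier_conjClasses]
    exact horb'
  have hnccP : ncc (P : Subgroup G) = 1 + (p - 1) / q := by
    obtain ⟨h1, h2⟩ := ncc_eq_aux hPnormal hclassP
    rw [hPcard] at h1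
    have h3 : p - 1 = (ncc (P : Subgroup G) - 1) * q := by omega
    rw [h3, Nat.mul_div_cancel _ hq0]
    omega
  have hnccbot : ncc (⊥ : Subgroup G) = 1 := by
    obtain ⟨h1, h2⟩ := ncc_eq_aux (inferInstance : (⊥ : Subgroup G).Normal)
      (q := q) (fun g hg hg1 => absurd (Subgroup.mem_bot.mp hg) hg1)
    rw [Subgroup.card_bot] at h1
    have h3 : (ncc (⊥ : Subgroup G) - 1) * q = 0 := by omega
    rcases Nat.mul_eq_zero.mp h3 with h | h
    · omega
    · omega
  have hPbot : (P : Subgroup G) ≠ ⊥ := by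
    intro h
    rw [h, Subgroup.card_bot] at hPcard
    exact hp.ne_one hPcard.symm
  have hPtop : (P : Subgroup G) ≠ ⊤ := by
    intro h
    rw [h, Subgroup.card_top, hcard] at hPcard
    have := hq.two_le
    nlinarith
  -- uniqueness
  have huniq : ∀ H : Subgroup G, H.Normal → H ≠ ⊥ → H ≠ ⊤ → H = (P : Subgroup G) := by
    intro H hHn hHbot hHtop
    have hdvd : Nat.card H ∣ p * q := hcard ▸ Subgroup.card_subgroup_dvd_card H
    rcases dvd_pq_cases hp hq hdvd with h | h | h | h
    · exact absurd (Subgroup.card_eq_one.mp h) hHbot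
    · -- card H = p : H = P
      by_contra hne'
      have hinf : H ⊓ (P : Subgroup G) = ⊥ := by
        have hd : Nat.card (H ⊓ (P : Subgroup G) : Subgroup G) ∣ p := by
          have := Subgroup.card_dvd_of_le (inf_le_left : H ⊓ (P : Subgroup G) ≤ H)
          rwa [h] at this
        rcases hp.eq_one_or_self_of_dvd _ hd with h1 | h1
        · exact Subgroup.card_eq_one.mp h1
        · exfalso
          apply hne'
          have e1 : H ⊓ (P : Subgroup G) = H :=
            Subgroup.eq_of_le_of_card_ge inf_le_left (by rw [h, h1])
          have e2 : H ⊓ (P : Subgroup G) = (P : Subgroup G) :=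
            Subgroup.eq_of_le_of_card_ge inf_le_right (by rw [hPcard, h1])
          rw [← e1, e2]
      have hinj : Function.Injective
          (fun x : H × (P : Subgroup G) => (x.1 : G) * (x.2 : G)) := by
        rintro ⟨⟨a, ha⟩, ⟨b, hb⟩⟩ ⟨⟨c, hc⟩, ⟨d, hd'⟩⟩ heq
        simp only [Prod.mk.injEq, Subtype.mk.injEq] at heq ⊢
        have key : c⁻¹ * a = d * b⁻¹ := by
          rw [inv_mul_eq_iff_eq_mul, ← mul_assoc, ← heq, mul_assoc, mul_inv_cancel, mul_one]
        have hmem : c⁻¹ * a ∈ H ⊓ (P : Subgroup G) :=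
          Subgroup.mem_inf.mpr ⟨mul_mem (inv_mem hc) ha,
            key ▸ mul_mem hd' (inv_mem hb)⟩
        rw [hinf, Subgroup.mem_bot] at hmem
        have hac : a = c := by
          have := hmem
          rw [inv_mul_eq_one] at this
          exact this.symm
        have hbd : b = d := by
          have := key
          rw [hmem] at this
          have : d * b⁻¹ = 1 := this.symm
          rw [mul_inv_eq_one] at this
          exact this.symm
        exact ⟨hac, hbd⟩
      have hle := Nat.card_le_card_of_injective _ hinj
      rw [Nat.card_prod, h, hPcard, hcard] at hle
      have := Nat.le_of_mul_le_mul_left hle hp0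
      omega
    · -- card H = q : contradiction (G would be abelian)
      exfalso
      have hinf : H ⊓ (P : Subgroup G) = ⊥ := by
        have hd1 : Nat.card (H ⊓ (P : Subgroup G) : Subgroup G) ∣ q := by
          have := Subgroup.card_dvd_of_le (inf_le_left : H ⊓ (P : Subgroup G) ≤ H)
          rwa [h] at this
        have hd2 : Nat.card (H ⊓ (P : Subgroup G) : Subgroup G) ∣ p := by
          have := Subgroup.card_dvd_of_le (inf_le_right : H ⊓ (P : Subgroup G) ≤ (P : Subgroup G))
          rwa [hPcard] at this
        exact Subgroup.card_eq_one.mp (Nat.dvd_one.mp (hcop ▸ Nat.dvd_gcd hd2 hd1))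
      have hdis : Disjoint H (P : Subgroup G) := disjoint_iff.mpr hinf
      have hHcyc : IsCyclic H := isCyclic_of_prime_card h
      have hsup : H ⊔ (P : Subgroup G) = ⊤ := by
        have h1 : q ∣ Nat.card (H ⊔ (P : Subgroup G) : Subgroup G) := by
          have := Subgroup.card_dvd_of_le (le_sup_left : H ≤ H ⊔ (P : Subgroup G))
          rwa [h] at this
        have h2 : p ∣ Nat.card (H ⊔ (P : Subgroup G) : Subgroup G) := by
          have := Subgroup.card_dvd_of_le (le_sup_right : (P : Subgroup G) ≤ H ⊔ (P : Subgroup G))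
          rwa [hPcard] at this
        have h3 : p * q ∣ Nat.card (H ⊔ (P : Subgroup G) : Subgroup G) :=
          hcop.mul_dvd_of_dvd_of_dvd h2 h1
        have h4 : Nat.card (H ⊔ (P : Subgroup G) : Subgroup G) ∣ p * q :=
          hcard ▸ Subgroup.card_subgroup_dvd_card _
        exact Subgroup.eq_top_of_card_eq _ ((Nat.dvd_antisymm h4 h3).trans hcard.symm)
      apply hna
      have hmem : ∀ a : G, ∃ x ∈ H, ∃ y ∈ (P : Subgroup G), x * y = a := by
        intro a
        have ha : a ∈ ((H : Set G) * ((P : Subgroup G) : Set G)) := by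
          rw [← Subgroup.mul_normal H (P : Subgroup G), hsup]
          trivial
        exact Set.mem_mul.mp ha
      intro a b
      obtain ⟨x, hx, y, hy, rfl⟩ := hmem a
      obtain ⟨z, hz, w, hw, rfl⟩ := hmem b
      have cxz : Commute x z := mul_comm_of_cyclic hHcyc hx hz
      have cyw : Commute y w := mul_comm_of_cyclic hPcyc hy hw
      have cxw : Commute x w :=
        Subgroup.commute_of_normal_of_disjoint H _ hHn hPnormal hdis x w hx hw
      have cyz : Commute y z :=
        (Subgroup.commute_of_normal_of_disjoint H _ hHn hPnormal hdis z y hz hy).symm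
      exact ((cxz.mul_right cxw).mul_left (cyz.mul_right cyw)).eq
    · exact absurd (Subgroup.eq_top_of_card_eq _ (h.trans hcard.symm)) hHtop
  have hbot_ne_top : (⊥ : Subgroup G) ≠ ⊤ := by
    intro h
    exact hPbot (le_bot_iff.mp (h ▸ le_top))
  refine ⟨⟨(P : Subgroup G), ⟨hPnormal, hPbot, hPtop⟩,
    fun H hH => huniq H hH.1 hH.2.1 hH.2.2⟩, ?_, ?_⟩
  · intro H h1 h2 h3
    rw [huniq H h1 h2 h3]
    exact hnccP
  · unfold XDecomposable KG
    ext n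
    simp only [Set.mem_setOf_eq, Set.mem_insert_iff, Set.mem_singleton_iff]
    constructor
    · rintro ⟨A, hAn, hAtop, rfl⟩
      by_cases hAbot : A = ⊥
      · left; rw [hAbot, hnccbot]
      · right; rw [huniq A hAn hAbot hAtop, hnccP]
    · rintro (rfl | rfl)
      · exact ⟨⊥, inferInstance, hbot_ne_top, hnccbot⟩
      · exact ⟨(P : Subgroup G), hPnormal, hPtop, hnccP⟩
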